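/- Let M be a finite-dimensional linear subspace of a Banach space X, let L ⊆ X be a closed linear subspace which is a complement of M in X (M ∩ L = {0}, M + L = X), and let P : X → L be the projection of ⟨L,M⟩. Then for every weakly closed bounded subset A ⊆ X, the image P(A) is weakly closed. -/

import Mathlib

open Metric Bornology Filter Topology

/-- A subset of a normed space is weakly closed if it is closed in the weak topology. -/
def IsWeaklyClosed {F : Type*} [NormedAddCommGroup F] [NormedSpace ℝ F]
    (S : Set F) : Prop :=
  IsClosed (X := WeakSpace ℝ F) S

/-- Lemma 3.9: if `M` is a finite-dimensional subspace of a Banach space `X`,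
`L` a closed complement of `M`, and `P` the projection of `⟨L,M⟩`, then the image
under `P` of a weakly closed bounded set is weakly closed. -/
theorem projection_image_weakly_closed
    (X : Type*) [NormedAddCommGroup X] [NormedSpace ℝ X] [CompleteSpace X]
    (M L : Submodule ℝ X) [FiniteDimensional ℝ M]
    (hLclosed : IsClosed (L : Set X))
    (hML : M ⊓ L = ⊥) (hMLtop : M ⊔ L = ⊤)
    (P : X → X)
    (hP : ∀ v ∈ M, ∀ u ∈ L, P (v + u) = u)
    (A : Set X) (hAwc : IsWeaklyClosed A) (hAb : IsBounded A) :
    IsWeaklyClosed (P '' A) := by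
  have hMc : IsClosed (M : Set X) := Submodule.closed_of_finiteDimensional M
  have hcompl : IsCompl L M :=
    ⟨disjoint_iff.mpr (by rwa [inf_comm] at hML), codisjoint_iff.mpr (by rwa [sup_comm] at hMLtop)⟩
  set Pc : X →L[ℝ] X :=
    L.subtypeL.comp (L.linearProjOfClosedCompl M hcompl hLclosed hMc) with hPc
  -- decomposition
  have hdec : ∀ x : X, ∃ v ∈ M, ∃ u ∈ L, x = v + u := by
    intro x
    have : x ∈ M ⊔ L := hMLtop ▸ Submodule.mem_top
    obtain ⟨v, hv, u, hu, h⟩ := Submodule.mem_sup.mp this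
    exact ⟨v, hv, u, hu, h.symm⟩
  have hPeq : ∀ x, P x = Pc x := by
    intro x
    obtain ⟨v, hv, u, hu, rfl⟩ := hdec x
    rw [hP v hv u hu]
    simp only [hPc, Submodule.linearProjOfClosedCompl, ContinuousLinearMap.comp_apply,
      Submodule.subtypeL_apply, ContinuousLinearMap.coe_fst', ContinuousLinearMap.coe_comp',
      Function.comp_apply, ContinuousLinearEquiv.coe_coe, map_add,
      Submodule.coe_prodEquivOfClosedCompl_symm]
    rw [show ((L.prodEquivOfIsCompl M hcompl).symm u) = (⟨u, hu⟩, 0) from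
        Submodule.prodEquivOfIsCompl_symm_apply_left (p := L) (q := M) hcompl (⟨u, hu⟩ : L),
      show ((L.prodEquivOfIsCompl M hcompl).symm v) = (0, ⟨v, hv⟩) from
        Submodule.prodEquivOfIsCompl_symm_apply_right (p := L) (q := M) hcompl (⟨v, hv⟩ : M)]
    simp
  have hPL : ∀ x, P x ∈ L := fun x => by
    rw [hPeq]; exact ((L.linearProjOfClosedCompl M hcompl hLclosed hMc) x).2
  -- L is weakly closed
  have hLw : IsClosed (X := WeakSpace ℝ X) (L : Set X) := by
    have h := (L.convex).toWeakSpace_closure (𝕜 := ℝ)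
    have himg : (toWeakSpace ℝ X) '' (L : Set X) = (L : Set X) := by
      exact Set.image_id _
    rw [hLclosed.closure_eq, himg] at h
    exact h ▸ isClosed_closure
  -- main argument
  rw [IsWeaklyClosed]
  refine isClosed_of_closure_subset fun y hy => ?_
  obtain ⟨z, hz⟩ : ∃ z : X, toWeakSpace ℝ X z = y := ⟨y, rfl⟩
  rw [← hz] at hy ⊢
  obtain ⟨U₀, hU₀, hUy₀⟩ := mem_closure_iff_ultrafilter.mp hy
  let U : Ultrafilter X := U₀
  have hU : P '' A ∈ U := hU₀
  have hUy : (U : Filter X) ≤ @nhds (WeakSpace ℝ X) _ (toWeakSpace ℝ X z) := hUy₀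
  have hyL : z ∈ L := by
    have hsub : closure (X := WeakSpace ℝ X) (P '' A) ⊆ closure (X := WeakSpace ℝ X) (L : Set X) :=
      closure_mono (by rintro - ⟨a, -, rfl⟩; exact hPL a)
    have h2 := hsub hy
    rw [hLw.closure_eq] at h2
    exact Set.mem_of_eq_of_mem rfl h2
  haveI hne : (Filter.comap P ↑U ⊓ 𝓟 A).NeBot := U.comap_inf_principal_neBot_of_image_mem hU
  set W : Ultrafilter X := Ultrafilter.of (Filter.comap P ↑U ⊓ 𝓟 A) with hW
  have hWle : ↑W ≤ Filter.comap P ↑U ⊓ 𝓟 A := Ultrafilter.of_le _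
  have hWA : A ∈ W := le_principal_iff.mp (hWle.trans inf_le_right)
  have hWP : Filter.Tendsto P ↑W (@nhds (WeakSpace ℝ X) _ (toWeakSpace ℝ X z)) :=
    le_trans (Filter.map_mono (hWle.trans inf_le_left)) (Filter.map_comap_le.trans hUy)
  obtain ⟨R, hR⟩ := hAb.subset_closedBall 0
  set C : ℝ := R + ‖Pc‖ * R with hC
  have hQK : ∀ a ∈ A, a - P a ∈ (M : Set X) ∩ closedBall 0 C := by
    intro a ha
    have h1 : ‖a‖ ≤ R := by simpa [dist_zero_right] using hR ha
    refine ⟨?_, ?_⟩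
    · obtain ⟨v, hv, u, hu, rfl⟩ := hdec a
      rw [hP v hv u hu]
      simpa using hv
    · rw [mem_closedBall, dist_zero_right]
      have h2 : ‖P a‖ ≤ ‖Pc‖ * R := by
        rw [hPeq]
        exact (Pc.le_opNorm a).trans (mul_le_mul_of_nonneg_left h1 (norm_nonneg _))
      calc ‖a - P a‖ ≤ ‖a‖ + ‖P a‖ := norm_sub_le _ _
        _ ≤ R + ‖Pc‖ * R := add_le_add h1 h2
  have hK : IsCompact ((M : Set X) ∩ closedBall 0 C) := by
    have heq : (M : Set X) ∩ closedBall 0 C = Subtype.val '' (closedBall (0 : M) C) := by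
      ext x
      constructor
      · rintro ⟨hxM, hx⟩
        exact ⟨⟨x, hxM⟩, by simpa [dist_zero_right, Submodule.coe_norm] using hx, rfl⟩
      · rintro ⟨⟨x, hxM⟩, hx, rfl⟩
        exact ⟨hxM, by simpa [dist_zero_right, Submodule.coe_norm] using hx⟩
    rw [heq]
    exact (isCompact_closedBall (0 : M) C).image continuous_subtype_val
  have hKW : (M : Set X) ∩ closedBall 0 C ∈ W.map (fun a => a - P a) :=
    Filter.mem_map.mpr (Filter.mem_of_superset hWA fun a ha => hQK a ha)
  obtain ⟨m, hmK, hm⟩ := hK.ultrafilter_le_nhds (W.map _) (le_principal_iff.mpr hKW)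
  have hm' : Filter.Tendsto (fun a => a - P a) ↑W (𝓝 m) := hm
  have hQw : Filter.Tendsto (fun a => a - P a) ↑W
      (@nhds (WeakSpace ℝ X) _ (toWeakSpace ℝ X m)) := by
    exact hm'.mono_right ((toWeakSpaceCLM ℝ X).continuous.tendsto m)
  have hsum : Filter.Tendsto (fun a => P a + (a - P a)) ↑W
      (@nhds (WeakSpace ℝ X) _ (toWeakSpace ℝ X z + toWeakSpace ℝ X m)) :=
    Filter.Tendsto.add (M := WeakSpace ℝ X) hWP hQw
  have hid : Filter.Tendsto (fun a : X => a) ↑W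
      (@nhds (WeakSpace ℝ X) _ (toWeakSpace ℝ X z + toWeakSpace ℝ X m)) := by
    simpa using hsum
  have hymA : z + m ∈ A :=
    hAwc.mem_of_tendsto hid (Filter.eventually_of_mem hWA fun a ha => ha)
  refine ⟨z + m, hymA, ?_⟩
  show P (z + m) = z
  rw [add_comm, hP m hmK.1 z hyL]
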